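/- Let ℓ be a fractal string and suppose its abscissa of convergence D := inf{α > 0 : ∑_{j=1}^∞ ℓ_j^α < ∞} satisfies 0 < D < 1. Then D coincides with the Minkowski dimension of the string defined via tube volumes: for every d ∈ (0, 1) with d < D one has limsup_{ε→0⁺} V(ε)/ε^{1−d} = +∞, and for every d ∈ (0, 1) with d > D one has lim_{ε→0⁺} V(ε)/ε^{1−d} = 0; consequently D = inf{d ∈ (0,1) : limsup_{ε→0⁺} V(ε)/ε^{1−d} < ∞}. -/

import Mathlib

open Filter Topology


lemma fsMinSummable {ℓ : ℕ → ℝ} (hpos : ∀ j, 0 < ℓ j) (hsum : Summable ℓ)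
    {c : ℝ} (hc : 0 ≤ c) : Summable (fun j => min (ℓ j) c) :=
  hsum.of_nonneg_of_le (fun j => le_min (hpos j).le hc) (fun j => min_le_left _ _)

lemma fsMinLe {a c α : ℝ} (ha : 0 < a) (hc : 0 < c) (hα0 : 0 < α) (hα1 : α ≤ 1) :
    min a c ≤ c ^ (1-α) * a ^ α := by
  rcases le_total a c with h | h
  · rw [min_eq_left h]
    calc a = a ^ (1-α) * a ^ α := by
          rw [← Real.rpow_add ha, show (1-α)+α = 1 by ring, Real.rpow_one]
      _ ≤ c ^ (1-α) * a ^ α :=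
          mul_le_mul_of_nonneg_right (Real.rpow_le_rpow ha.le h (by linarith))
            (Real.rpow_nonneg ha.le _)
  · rw [min_eq_right h]
    calc c = c ^ (1-α) * c ^ α := by
          rw [← Real.rpow_add hc, show (1-α)+α = 1 by ring, Real.rpow_one]
      _ ≤ c ^ (1-α) * a ^ α :=
          mul_le_mul_of_nonneg_left (Real.rpow_le_rpow hc.le h hα0.le)
            (Real.rpow_nonneg hc.le _)

/-- Tube volume upper bound via `α`-sum. -/
lemma fsVub {ℓ : ℕ → ℝ} (hpos : ∀ j, 0 < ℓ j) (hsum : Summable ℓ)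
    {α : ℝ} (hα0 : 0 < α) (hα1 : α ≤ 1) (hsummα : Summable fun j => ℓ j ^ α)
    {ε : ℝ} (hε : 0 < ε) :
    (∑' j, min (ℓ j) (2*ε)) ≤ (2*ε) ^ (1-α) * ∑' j, ℓ j ^ α := by
  rw [← tsum_mul_left]
  exact Summable.tsum_le_tsum (fun j => fsMinLe (hpos j) (by linarith) hα0 hα1)
    (fsMinSummable hpos hsum (by linarith)) (hsummα.mul_left _)

/-- Tube volume lower bound at `ε = ℓ j / 2`. -/
lemma fsVlb {ℓ : ℕ → ℝ} (hpos : ∀ j, 0 < ℓ j) (hmono : Antitone ℓ)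
    (hsum : Summable ℓ) (j : ℕ) :
    ((j:ℝ)+1) * ℓ j ≤ ∑' k, min (ℓ k) (ℓ j) := by
  have hb : ∑ k ∈ Finset.range (j+1), min (ℓ k) (ℓ j) = ((j:ℝ)+1) * ℓ j := by
    rw [Finset.sum_congr rfl
      (fun k hk => min_eq_right (hmono (Nat.lt_succ_iff.mp (Finset.mem_range.mp hk))))]
    simp [Finset.sum_const, nsmul_eq_mul]
  rw [← hb]
  exact Summable.sum_le_tsum _ (fun k _ => le_min (hpos k).le (hpos j).le)
    (fsMinSummable hpos hsum (hpos j).le)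

/-- If the tube volume satisfies `V(ε) ≤ C ε^{1-d}` for small `ε`, then
`∑ ℓ_j^α < ∞` for every `α ∈ (d, 1)`. -/
lemma fsSummableOfBound {ℓ : ℕ → ℝ} (hpos : ∀ j, 0 < ℓ j) (hmono : Antitone ℓ)
    (hsum : Summable ℓ) {d : ℝ} (hd0 : 0 < d) (hd1 : d < 1)
    {C δ : ℝ} (hC : 0 ≤ C) (hδ : 0 < δ)
    (hbd : ∀ ε : ℝ, 0 < ε → ε < δ → (∑' j, min (ℓ j) (2*ε)) ≤ C * ε ^ (1-d))
    {α : ℝ} (hdα : d < α) (hα1 : α < 1) : Summable (fun j => ℓ j ^ α) := by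
  set K := C / 2 ^ (1-d) with hKdef
  have hK : 0 ≤ K := div_nonneg hC (Real.rpow_nonneg (by norm_num) _)
  -- eventually ℓ j / 2 < δ
  have htend : Tendsto ℓ atTop (𝓝 0) := hsum.tendsto_atTop_zero
  have hev : ∀ᶠ j in atTop, ℓ j < 2 * δ :=
    htend.eventually_lt_const (by linarith)
  obtain ⟨N, hN⟩ := eventually_atTop.mp hev
  -- key estimate: (j+1) ℓ_j^d ≤ K for j ≥ N
  have hstep : ∀ j, N ≤ j → ℓ j ^ d ≤ K / ((j:ℝ)+1) := by
    intro j hj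
    have hℓ := hpos j
    have hε : 0 < ℓ j / 2 := by positivity
    have h1 : ((j:ℝ)+1) * ℓ j ≤ ∑' k, min (ℓ k) (2 * (ℓ j / 2)) := by
      rw [show 2 * (ℓ j / 2) = ℓ j by ring]
      exact fsVlb hpos hmono hsum j
    have h2 := hbd (ℓ j / 2) hε (by linarith [hN j hj])
    have h3 : ((j:ℝ)+1) * ℓ j ≤ C * (ℓ j / 2) ^ (1-d) := h1.trans h2
    have h4 : (ℓ j / 2 : ℝ) ^ (1-d) = ℓ j ^ (1-d) / 2 ^ (1-d) :=
      Real.div_rpow hℓ.le (by norm_num) _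
    have h5 : ℓ j ^ d * ℓ j ^ (1-d) = ℓ j := by
      rw [← Real.rpow_add hℓ, show d+(1-d) = 1 by ring, Real.rpow_one]
    have hpow : 0 < ℓ j ^ (1-d) := Real.rpow_pos_of_pos hℓ _
    have h2pow : (0:ℝ) < 2 ^ (1-d) := Real.rpow_pos_of_pos (by norm_num) _
    rw [le_div_iff₀ (by positivity : (0:ℝ) < (j:ℝ)+1)]
    refine le_of_mul_le_mul_right ?_ hpow
    calc ℓ j ^ d * ((j:ℝ)+1) * ℓ j ^ (1-d) = ((j:ℝ)+1) * (ℓ j ^ d * ℓ j ^ (1-d)) := by ring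
      _ = ((j:ℝ)+1) * ℓ j := by rw [h5]
      _ ≤ C * (ℓ j / 2) ^ (1-d) := h3
      _ = K * ℓ j ^ (1-d) := by rw [h4, hKdef]; ring
  -- comparison with a p-series
  set q := α / d with hq
  have hq1 : 1 < q := (one_lt_div hd0).2 hdα
  have hq0 : 0 < q := by linarith
  have hps : Summable (fun j : ℕ => K ^ q * ((1:ℝ)/((j:ℝ)+1) ^ q)) := by
    apply Summable.mul_left
    have h := (Real.summable_one_div_nat_rpow (p := q)).2 hq1
    have h2 := (summable_nat_add_iff 1).2 h
    simpa using h2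
  rw [← summable_nat_add_iff N]
  refine hps.of_nonneg_of_le (fun j => Real.rpow_nonneg (hpos _).le α) (fun j => ?_)
  have hb1 : ℓ (j+N) ^ d ≤ K / ((j:ℝ)+1) := by
    refine (hstep (j+N) (Nat.le_add_left N j)).trans ?_
    have : ((j:ℝ)+1) ≤ ((j+N:ℕ):ℝ)+1 := by push_cast; linarith [Nat.cast_nonneg (α := ℝ) N]
    gcongr
  have hb2 : ℓ (j+N) ^ α = (ℓ (j+N) ^ d) ^ q := by
    rw [← Real.rpow_mul (hpos _).le, show d * q = α by rw [hq]; field_simp]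
  rw [hb2]
  calc (ℓ (j+N) ^ d) ^ q ≤ (K / ((j:ℝ)+1)) ^ q :=
        Real.rpow_le_rpow (Real.rpow_nonneg (hpos _).le _) hb1 hq0.le
    _ = K ^ q * ((1:ℝ)/((j:ℝ)+1) ^ q) := by
        rw [Real.div_rpow hK (by positivity)]; ring

/-- If `∑ ℓ_j^β < ∞` with `0 < β < d < 1`, then `V(ε)/ε^{1-d} → 0`. -/
lemma fsTendstoZero {ℓ : ℕ → ℝ} (hpos : ∀ j, 0 < ℓ j) (hsum : Summable ℓ)
    {β d : ℝ} (hβ0 : 0 < β) (hβd : β < d) (hd1 : d < 1)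
    (hsumβ : Summable fun j => ℓ j ^ β) :
    Tendsto (fun ε : ℝ => (∑' j, min (ℓ j) (2 * ε)) / ε ^ (1 - d))
      (nhdsWithin 0 (Set.Ioi 0)) (𝓝 0) := by
  set c := 2 ^ (1-β) * ∑' j, ℓ j ^ β with hc
  have hcnn : 0 ≤ c := by
    apply mul_nonneg (Real.rpow_nonneg (by norm_num) _)
    exact tsum_nonneg (fun j => Real.rpow_nonneg (hpos j).le _)
  have hg : Tendsto (fun ε : ℝ => c * ε ^ (d-β)) (nhdsWithin 0 (Set.Ioi 0)) (𝓝 0) := by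
    have hcont : ContinuousAt (fun x : ℝ => x ^ (d-β)) 0 :=
      Real.continuousAt_rpow_const 0 _ (Or.inr (by linarith))
    have h0 : (0:ℝ) ^ (d-β) = 0 := Real.zero_rpow (by linarith)
    have ht : Tendsto (fun ε : ℝ => ε ^ (d-β)) (nhdsWithin 0 (Set.Ioi 0)) (𝓝 0) := by
      have ht' := hcont.tendsto.mono_left (nhdsWithin_le_nhds (s := Set.Ioi 0))
      rwa [h0] at ht'
    simpa using ht.const_mul c
  apply squeeze_zero' ?_ ?_ hg
  · filter_upwards [self_mem_nhdsWithin] with ε hε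
    have hε' : (0:ℝ) < ε := hε
    apply div_nonneg (tsum_nonneg (fun j => le_min (hpos j).le (by linarith)))
      (Real.rpow_nonneg hε'.le _)
  · filter_upwards [self_mem_nhdsWithin] with ε hε
    have hε' : (0:ℝ) < ε := hε
    have hpow : (0:ℝ) < ε ^ (1-d) := Real.rpow_pos_of_pos hε' _
    rw [div_le_iff₀ hpow]
    calc (∑' j, min (ℓ j) (2*ε)) ≤ (2*ε) ^ (1-β) * ∑' j, ℓ j ^ β :=
          fsVub hpos hsum hβ0 (by linarith) hsumβ hε'
      _ = c * ε ^ (d-β) * ε ^ (1-d) := by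
          have hε2 : ε ^ (d-β) * ε ^ (1-d) = ε ^ (1-β) := by
            rw [← Real.rpow_add hε', show d-β+(1-d) = 1-β by ring]
          rw [Real.mul_rpow (by norm_num) hε'.le, hc]
          linear_combination (-(2:ℝ) ^ (1-β) * ∑' j, ℓ j ^ β) * hε2

/-- **The abscissa of convergence equals the Minkowski dimension** (Lapidus; §2(a)):
for a fractal string `ℓ` with abscissa of convergence `D ∈ (0,1)`, the tube volume
`V(ε) = ∑_j min(ℓ_j, 2ε)` satisfies `limsup_{ε→0⁺} V(ε)/ε^{1−d} = ∞` for `d < D` and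
`lim_{ε→0⁺} V(ε)/ε^{1−d} = 0` for `d > D` (`d ∈ (0,1)`); consequently `D` is the infimum
of the `d ∈ (0,1)` with finite upper `d`-dimensional Minkowski content. -/
theorem abscissa_eq_minkowski_dimension
    (D : ℝ) (hD : D ∈ Set.Ioo (0 : ℝ) 1) (ℓ : ℕ → ℝ)
    (hpos : ∀ j, 0 < ℓ j) (hmono : Antitone ℓ) (hsum : Summable ℓ)
    (habs : D = sInf {α : ℝ | 0 < α ∧ Summable fun j => ℓ j ^ α}) :
    (∀ d : ℝ, d ∈ Set.Ioo (0 : ℝ) 1 → d < D →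
      Filter.limsup
        (fun ε : ℝ => ENNReal.ofReal ((∑' j, min (ℓ j) (2 * ε)) / ε ^ (1 - d)))
        (nhdsWithin 0 (Set.Ioi 0)) = ⊤) ∧
    (∀ d : ℝ, d ∈ Set.Ioo (0 : ℝ) 1 → D < d →
      Tendsto (fun ε : ℝ => (∑' j, min (ℓ j) (2 * ε)) / ε ^ (1 - d))
        (nhdsWithin 0 (Set.Ioi 0)) (𝓝 0)) ∧
    D = sInf {d : ℝ | d ∈ Set.Ioo (0 : ℝ) 1 ∧
      Filter.limsup
        (fun ε : ℝ => ENNReal.ofReal ((∑' j, min (ℓ j) (2 * ε)) / ε ^ (1 - d)))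
        (nhdsWithin 0 (Set.Ioi 0)) < ⊤} := by
  set S₀ : Set ℝ := {α : ℝ | 0 < α ∧ Summable fun j => ℓ j ^ α} with hS₀
  have hS₀ne : S₀.Nonempty := by
    by_contra h
    rw [Set.not_nonempty_iff_eq_empty] at h
    rw [habs, h, Real.sInf_empty] at hD
    exact lt_irrefl 0 hD.1
  -- Part 1
  have part1 : ∀ d : ℝ, d ∈ Set.Ioo (0 : ℝ) 1 → d < D →
      Filter.limsup
        (fun ε : ℝ => ENNReal.ofReal ((∑' j, min (ℓ j) (2 * ε)) / ε ^ (1 - d)))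
        (nhdsWithin 0 (Set.Ioi 0)) = ⊤ := by
    intro d hd hdD
    by_contra h
    set f := fun ε : ℝ => ENNReal.ofReal ((∑' j, min (ℓ j) (2 * ε)) / ε ^ (1 - d)) with hf
    have hfin : limsup f (nhdsWithin 0 (Set.Ioi 0)) < ⊤ := lt_top_iff_ne_top.2 h
    set L := limsup f (nhdsWithin 0 (Set.Ioi 0)) with hL
    have h1 : L < L + 1 := ENNReal.lt_add_right hfin.ne one_ne_zero
    have h2 : ∀ᶠ ε in nhdsWithin 0 (Set.Ioi 0), f ε < L + 1 :=
      Filter.eventually_lt_of_limsup_lt h1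
    set C := (L + 1).toReal with hC
    have hCnn : 0 ≤ C := ENNReal.toReal_nonneg
    have hLne : L + 1 ≠ ⊤ := by
      simp [ENNReal.add_ne_top, hfin.ne]
    have h3 : ∀ᶠ ε in nhdsWithin 0 (Set.Ioi 0),
        (∑' j, min (ℓ j) (2 * ε)) / ε ^ (1 - d) ≤ C := by
      filter_upwards [h2] with ε hε
      exact (ENNReal.ofReal_le_iff_le_toReal hLne).1 hε.le
    rw [eventually_nhdsWithin_iff, Metric.eventually_nhds_iff] at h3
    obtain ⟨δ, hδ, hδ'⟩ := h3
    have hbd : ∀ ε : ℝ, 0 < ε → ε < δ → (∑' j, min (ℓ j) (2*ε)) ≤ C * ε ^ (1-d) := by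
      intro ε hε hεδ
      have hdist : dist ε (0:ℝ) < δ := by
        rw [Real.dist_eq, sub_zero, abs_of_pos hε]; exact hεδ
      have h4 := hδ' hdist hε
      rwa [div_le_iff₀ (Real.rpow_pos_of_pos hε _)] at h4
    have hα : Summable (fun j => ℓ j ^ ((d+D)/2)) :=
      fsSummableOfBound hpos hmono hsum hd.1 hd.2 hCnn hδ hbd
        (by linarith) (by linarith [hD.2])
    have hmem : (d+D)/2 ∈ S₀ := ⟨by linarith [hd.1], hα⟩
    have hle : sInf S₀ ≤ (d+D)/2 := csInf_le ⟨0, fun x hx => hx.1.le⟩ hmem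
    rw [← habs] at hle
    linarith
  -- Part 2
  have part2 : ∀ d : ℝ, d ∈ Set.Ioo (0 : ℝ) 1 → D < d →
      Tendsto (fun ε : ℝ => (∑' j, min (ℓ j) (2 * ε)) / ε ^ (1 - d))
        (nhdsWithin 0 (Set.Ioi 0)) (𝓝 0) := by
    intro d hd hDd
    have hsInf : sInf S₀ < d := habs ▸ hDd
    obtain ⟨β, hβmem, hβd⟩ := exists_lt_of_csInf_lt hS₀ne hsInf
    exact fsTendstoZero hpos hsum hβmem.1 hβd hd.2 hβmem.2
  refine ⟨part1, part2, ?_⟩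
  -- Part 3
  set S : Set ℝ := {d : ℝ | d ∈ Set.Ioo (0 : ℝ) 1 ∧
      Filter.limsup
        (fun ε : ℝ => ENNReal.ofReal ((∑' j, min (ℓ j) (2 * ε)) / ε ^ (1 - d)))
        (nhdsWithin 0 (Set.Ioi 0)) < ⊤} with hS
  have hsub : Set.Ioo D 1 ⊆ S := by
    intro d hd
    have hd' : d ∈ Set.Ioo (0:ℝ) 1 := ⟨hD.1.trans hd.1, hd.2⟩
    refine ⟨hd', ?_⟩
    have ht := part2 d hd' hd.1
    have ht2 : Tendsto
        (fun ε : ℝ => ENNReal.ofReal ((∑' j, min (ℓ j) (2 * ε)) / ε ^ (1 - d)))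
        (nhdsWithin 0 (Set.Ioi 0)) (𝓝 0) := by
      have := (ENNReal.continuous_ofReal.tendsto 0).comp ht
      simpa [Function.comp_def] using this
    rw [ht2.limsup_eq]
    exact ENNReal.zero_lt_top
  have hlb : ∀ x ∈ S, D ≤ x := by
    intro x hx
    obtain ⟨hx1, hx2⟩ := hx
    by_contra hxD
    push_neg at hxD
    rw [part1 x hx1 hxD] at hx2
    exact lt_irrefl ⊤ hx2
  have hmid : (D+1)/2 ∈ Set.Ioo D 1 := ⟨by linarith [hD.2], by linarith [hD.2]⟩
  apply le_antisymm
  · exact le_csInf ⟨(D+1)/2, hsub hmid⟩ hlb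
  · calc sInf S ≤ sInf (Set.Ioo D 1) :=
        csInf_le_csInf ⟨D, hlb⟩ ⟨(D+1)/2, hmid⟩ hsub
      _ = D := csInf_Ioo hD.2
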